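/- The min-entropy of the LIGA encryption is at least γ = m(t_pub - u)·log_2(q) + t_pub(n - t_pub - 1)·log_2(q): for every plaintext m, public key pk, and candidate ciphertext c, the probability over the encryption randomness (uniformly random α ∈ F_{q^{mu}}\{0} and uniformly random e of F_q-rank t_pub) that Encrypt(m, pk) = c is at most q^{-m(t_pub-u) - t_pub(n-t_pub-1)}. -/

import Mathlib

/-- The `F_q`-rank of a vector over an extension field. -/
noncomputable def rankq (Fq : Type) {Fqm : Type} [Field Fq] [Field Fqm] [Algebra Fq Fqm]
    {n : ℕ} (v : Fin n → Fqm) : ℕ :=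
  Module.finrank Fq (Submodule.span Fq (Set.range v))

/-- Lower bound on the number of vectors of given `F_q`-rank. -/
lemma card_rankq_ge (Fq Fqm : Type) [Field Fq] [Fintype Fq] [Field Fqm] [Fintype Fqm]
    [Algebra Fq Fqm] (n t : ℕ) (htn : t ≤ n) (htm : t ≤ Module.finrank Fq Fqm) :
    (Fintype.card Fq) ^ (t * (Module.finrank Fq Fqm - 1) + t * (n - t)) ≤
      Nat.card {e : Fin n → Fqm // rankq Fq e = t} := by
  classical
  set q := Fintype.card Fq with hq
  set m := Module.finrank Fq Fqm with hmdef
  -- the injection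
  let F : ({s : Fin t → Fqm // LinearIndependent Fq s} × (Fin (n - t) → Fin t → Fq)) →
      {e : Fin n → Fqm // rankq Fq e = t} := fun p =>
    ⟨fun j => if h : (j : ℕ) < t then p.1.1 ⟨j, h⟩
      else ∑ i, p.2 ⟨(j : ℕ) - t, by omega⟩ i • p.1.1 i, by
      obtain ⟨⟨v, hv⟩, a⟩ := p
      have hspan : Submodule.span Fq (Set.range fun j : Fin n =>
          if h : (j : ℕ) < t then v ⟨j, h⟩ else ∑ i, a ⟨(j : ℕ) - t, by omega⟩ i • v i)
          = Submodule.span Fq (Set.range v) := by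
        apply le_antisymm
        · rw [Submodule.span_le]
          rintro x ⟨j, rfl⟩
          by_cases h : (j : ℕ) < t
          · simp only [h, dif_pos]
            exact Submodule.subset_span (Set.mem_range_self _)
          · simp only [h, dif_neg, not_false_iff]
            exact Submodule.sum_mem _ fun i _ =>
              Submodule.smul_mem _ _ (Submodule.subset_span (Set.mem_range_self _))
        · rw [Submodule.span_le]
          rintro x ⟨i, rfl⟩
          have : v i = (fun j : Fin n => if h : (j : ℕ) < t then v ⟨j, h⟩
              else ∑ i, a ⟨(j : ℕ) - t, by omega⟩ i • v i) ⟨i, by omega⟩ := by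
            simp [i.2]
          rw [this]
          exact Submodule.subset_span (Set.mem_range_self _)
      rw [rankq, hspan, finrank_span_eq_card hv, Fintype.card_fin]⟩
  have hFinj : Function.Injective F := by
    rintro ⟨⟨v, hv⟩, a⟩ ⟨⟨w, hw⟩, b⟩ h
    have he : ∀ j : Fin n, (if h : (j : ℕ) < t then v ⟨j, h⟩
        else ∑ i, a ⟨(j : ℕ) - t, by omega⟩ i • v i) =
        (if h : (j : ℕ) < t then w ⟨j, h⟩ else ∑ i, b ⟨(j : ℕ) - t, by omega⟩ i • w i) :=
      fun j => congrFun (congrArg Subtype.val h) j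
    have hvw : v = w := by
      funext i
      have := he ⟨i, by omega⟩
      simpa [i.2] using this
    subst hvw
    have hab : a = b := by
      funext j' i
      have hj : (t + (j' : ℕ)) < n := by omega
      have := he ⟨t + (j' : ℕ), hj⟩
      simp only [show ¬((⟨t + (j' : ℕ), hj⟩ : Fin n) : ℕ) < t by simp, dif_neg,
        not_false_iff] at this
      have hfin : (⟨((⟨t + (j' : ℕ), hj⟩ : Fin n) : ℕ) - t, by omega⟩ : Fin (n - t)) = j' := by
        ext; simp
      rw [hfin] at this
      have hzero : ∑ i, (a j' i - b j' i) • v i = 0 := by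
        simp only [sub_smul, Finset.sum_sub_distrib, this, sub_self]
      exact sub_eq_zero.mp (Fintype.linearIndependent_iff.mp hv _ hzero i)
    rw [hab]
  have hcard := Nat.card_le_card_of_injective F hFinj
  rw [Nat.card_prod, card_linearIndependent htm] at hcard
  have hq2 : 2 ≤ q := Fintype.one_lt_card
  have hfun : Nat.card (Fin (n - t) → Fin t → Fq) = q ^ (t * (n - t)) := by
    simp [Nat.card_eq_fintype_card, Fintype.card_fun, ← pow_mul, Nat.mul_comm]
    rfl
  have hprod : q ^ (t * (m - 1)) ≤ ∏ i : Fin t, (q ^ m - q ^ (i : ℕ)) := by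
    calc q ^ (t * (m - 1)) = ∏ _i : Fin t, q ^ (m - 1) := by
          rw [Finset.prod_const, Finset.card_univ, Fintype.card_fin, ← pow_mul, Nat.mul_comm]
      _ ≤ ∏ i : Fin t, (q ^ m - q ^ (i : ℕ)) := by
          apply Finset.prod_le_prod (fun _ _ => Nat.zero_le _)
          intro i _
          have hi : (i : ℕ) ≤ m - 1 := by have := i.2; omega
          have h1 : q ^ (i : ℕ) ≤ q ^ (m - 1) :=
            Nat.pow_le_pow_right (by omega) hi
          have h2 : q ^ (m - 1) * 2 ≤ q ^ m := by
            have hm1 : m - 1 + 1 = m := by have := i.2; omega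
            calc q ^ (m - 1) * 2 ≤ q ^ (m - 1) * q := by
                  exact Nat.mul_le_mul_left _ hq2
              _ = q ^ m := by rw [← pow_succ, hm1]
          omega
  calc q ^ (t * (m - 1) + t * (n - t))
      = q ^ (t * (m - 1)) * q ^ (t * (n - t)) := pow_add q _ _
    _ ≤ (∏ i : Fin t, (q ^ m - q ^ (i : ℕ))) * q ^ (t * (n - t)) :=
        Nat.mul_le_mul_right _ hprod
    _ = (∏ i : Fin t, (q ^ m - q ^ (i : ℕ))) * Nat.card (Fin (n - t) → Fin t → Fq) := by
        rw [hfun]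
    _ ≤ _ := hcard

/-- γ-spreadness of LIGA encryption. For every plaintext `m0` (padded with
`u` zeros), public key `(G, kpub)` and candidate ciphertext `c`, the probability over the
uniformly random encryption randomness `(α, e)` (with `α ∈ F_{q^{mu}} \ {0}` and `e` of
`F_q`-rank `t_pub`) that `(m0)·G + Tr(α kpub) + e = c` is at most
`q^{-m(t_pub-u) - t_pub(n-t_pub-1)}`. -/
theorem liga_encryption_gamma_spread (q m n k u tpub : ℕ)
    (Fq Fqm L : Type) [Field Fq] [Fintype Fq] [Field Fqm] [Fintype Fqm] [Field L] [Fintype L]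
    [Algebra Fq Fqm] [Algebra Fqm L] [Algebra Fq L] [IsScalarTower Fq Fqm L]
    (hcard : Fintype.card Fq = q)
    (hm : Module.finrank Fq Fqm = m) (hu : Module.finrank Fqm L = u)
    (hutp : u ≤ tpub) (htpn : tpub + 1 ≤ n) (htpm : tpub ≤ m)
    (G : Matrix (Fin k) (Fin n) Fqm) (kpub : Fin n → L)
    (m0 : Fin k → Fqm) (hm0 : ∀ i : Fin k, k - u ≤ (i : ℕ) → m0 i = 0)
    (c : Fin n → Fqm) :
    (Nat.card {p : {α : L // α ≠ 0} × {e : Fin n → Fqm // rankq Fq e = tpub} //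
          Matrix.vecMul m0 G + (fun j => Algebra.trace Fqm L ((p.1.1 : L) * kpub j))
            + (p.2.1 : Fin n → Fqm) = c} : ℝ)
        / (Nat.card ({α : L // α ≠ 0} × {e : Fin n → Fqm // rankq Fq e = tpub}) : ℝ)
      ≤ ((q : ℝ) ^ (m * (tpub - u) + tpub * (n - tpub - 1)))⁻¹ := by
  classical
  have hq2 : 2 ≤ q := hcard ▸ Fintype.one_lt_card
  set E := m * (tpub - u) + tpub * (n - tpub - 1) with hE
  set E' := tpub * (m - 1) + tpub * (n - tpub) with hE'
  -- numerator ≤ card of nonzero α's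
  set Num := Nat.card {p : {α : L // α ≠ 0} × {e : Fin n → Fqm // rankq Fq e = tpub} //
      Matrix.vecMul m0 G + (fun j => Algebra.trace Fqm L ((p.1.1 : L) * kpub j))
        + (p.2.1 : Fin n → Fqm) = c} with hNum
  set Na := Nat.card {α : L // α ≠ 0} with hNa
  set Ne := Nat.card {e : Fin n → Fqm // rankq Fq e = tpub} with hNe
  have hnum_le : Num ≤ Na := by
    apply Nat.card_le_card_of_injective (fun p => p.1.1)
    rintro ⟨⟨α, e⟩, hp⟩ ⟨⟨β, f⟩, hq⟩ h
    simp only at h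
    subst h
    have hef : (e : Fin n → Fqm) = (f : Fin n → Fqm) := add_left_cancel (hp.trans hq.symm)
    simp only [Subtype.mk.injEq, Prod.mk.injEq]
    exact ⟨trivial, Subtype.ext hef⟩
  -- lower bound on Ne
  have hNe_ge : q ^ E' ≤ Ne := by
    have := card_rankq_ge Fq Fqm n tpub (by omega) (hm ▸ htpm)
    rwa [hcard, hm] at this
  have hEle : E ≤ E' := by
    rcases Nat.eq_zero_or_pos m with hm0' | hm1
    · have : tpub = 0 := by omega
      simp [hE, hE', this, hm0']
    · obtain ⟨a, ha⟩ : ∃ a, m = a + 1 := ⟨m - 1, by omega⟩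
      obtain ⟨b, hb⟩ : ∃ b, n - tpub = b + 1 := ⟨n - tpub - 1, by omega⟩
      have hb' : n - tpub - 1 = b := by omega
      have hma : m - 1 = a := by omega
      rw [hE, hE', hb', hb, hma, ha]
      calc (a + 1) * (tpub - u) + tpub * b ≤ (a + 1) * tpub + tpub * b :=
            Nat.add_le_add_right (Nat.mul_le_mul_left _ (Nat.sub_le _ _)) _
        _ = tpub * a + tpub * (b + 1) := by ring
  have hNe_geE : q ^ E ≤ Ne := le_trans (Nat.pow_le_pow_right (by omega) hEle) hNe_ge
  have : Nonempty {α : L // α ≠ 0} := ⟨⟨1, one_ne_zero⟩⟩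
  have hNa_pos : 0 < Na := Nat.card_pos (α := {α : L // α ≠ 0})
  have hNe_pos : 0 < Ne := lt_of_lt_of_le (Nat.pow_pos (by omega)) hNe_geE
  -- key inequality in ℕ
  have hkey : Num * q ^ E ≤ Na * Ne := Nat.mul_le_mul hnum_le hNe_geE
  have hden : Nat.card ({α : L // α ≠ 0} × {e : Fin n → Fqm // rankq Fq e = tpub})
      = Na * Ne := Nat.card_prod _ _
  rw [hden]
  have hdpos : (0 : ℝ) < ((Na * Ne : ℕ) : ℝ) := by
    exact_mod_cast Nat.mul_pos hNa_pos hNe_pos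
  have hqEpos : (0 : ℝ) < (q : ℝ) ^ E := by positivity
  rw [div_le_iff₀ (by exact_mod_cast hdpos), inv_mul_eq_div, le_div_iff₀ hqEpos]
  calc (Num : ℝ) * (q : ℝ) ^ E = ((Num * q ^ E : ℕ) : ℝ) := by push_cast; ring
    _ ≤ ((Na * Ne : ℕ) : ℝ) := by exact_mod_cast hkey
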